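/- Let γ > 2 and F_γ : L¹(ℝ) → ℝ ∪ {+∞}, F_γ(m) = ‖m̂ − exp‖²_{L²_γ} on its domain. For any α > 0 and m ∈ L¹(ℝ), defining m_α(x) := α^{-1-ix} m(x), one has F_γ(m_α) = α^{γ-2} F_γ(m). -/

import Mathlib

open MeasureTheory Complex
open scoped ENNReal

noncomputable def FT (f : ℝ → ℂ) : ℝ → ℂ :=
  fun k => ∫ x : ℝ, f x * Complex.exp (-Complex.I * k * x)

/-- `F_γ(m) = ‖m̂ − exp‖²_{L²_γ}` as an extended-real-valued functional. -/
noncomputable def Fgamma (γ : ℝ) (m : ℝ → ℂ) : ℝ≥0∞ :=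
  ∫⁻ k : ℝ, (‖FT m k - Real.exp k‖₊ : ℝ≥0∞) ^ 2 * ENNReal.ofReal (Real.exp (-γ * k))

theorem Fgamma_scaling (γ : ℝ) (hγ : 2 < γ) (α : ℝ) (hα : 0 < α)
    (m : ℝ → ℂ) (hm : Integrable m) :
    Fgamma γ (fun x : ℝ => Complex.exp ((-1 - Complex.I * x) * Real.log α) * m x) =
      ENNReal.ofReal (α ^ (γ - 2)) * Fgamma γ m := by
  set L := Real.log α with hL
  have hαc : Complex.exp (-(L : ℂ)) = (α : ℂ)⁻¹ := by
    rw [Complex.exp_neg]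
    congr 1
    rw [← Complex.ofReal_exp, hL, Real.exp_log hα]
  have hFT : ∀ k : ℝ,
      FT (fun x : ℝ => Complex.exp ((-1 - Complex.I * x) * L) * m x) k
        = (α : ℂ)⁻¹ * FT m (k + L) := by
    intro k
    unfold FT
    rw [← integral_const_mul]
    congr 1
    ext x
    have h1 : Complex.exp ((-1 - Complex.I * x) * L) * m x *
          Complex.exp (-Complex.I * k * x)
        = Complex.exp ((-1 - Complex.I * x) * L + -Complex.I * k * x) * m x := by
      rw [Complex.exp_add]; ring
    have h2 : ((-1 - Complex.I * x) * L + -Complex.I * k * x : ℂ)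
        = -(L : ℂ) + -Complex.I * (↑(k + L)) * x := by
      push_cast; ring
    rw [h1, h2, Complex.exp_add, hαc]
    ring
  have hdiff : ∀ k : ℝ,
      FT (fun x : ℝ => Complex.exp ((-1 - Complex.I * x) * L) * m x) k - Real.exp k
        = (α : ℂ)⁻¹ * (FT m (k + L) - Real.exp (k + L)) := by
    intro k
    rw [hFT k, mul_sub]
    congr 1
    rw [Real.exp_add]
    push_cast
    have h3 : Complex.exp (Real.log α : ℂ) = (α : ℂ) := by
      rw [← Complex.ofReal_exp, Real.exp_log hα]
    rw [hL, h3, mul_comm ((α:ℂ)⁻¹), mul_assoc,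
      mul_inv_cancel₀ (Complex.ofReal_ne_zero.mpr hα.ne'), mul_one]
  have hof : ∀ z : ℂ, (‖z‖₊ : ℝ≥0∞) ^ 2 = ENNReal.ofReal (‖z‖ ^ 2) := by
    intro z
    rw [ENNReal.ofReal_pow (norm_nonneg z), ofReal_norm, enorm_eq_nnnorm]
  have hpt : ∀ k : ℝ,
      (‖FT (fun x : ℝ => Complex.exp ((-1 - Complex.I * x) * L) * m x) k
          - Real.exp k‖₊ : ℝ≥0∞) ^ 2
          * ENNReal.ofReal (Real.exp (-γ * k))
        = ENNReal.ofReal (α ^ (γ - 2)) *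
          ((‖FT m (k + L) - Real.exp (k + L)‖₊ : ℝ≥0∞) ^ 2
            * ENNReal.ofReal (Real.exp (-γ * (k + L)))) := by
    intro k
    rw [hdiff k, hof, hof, ← ENNReal.ofReal_mul (by positivity),
      ← ENNReal.ofReal_mul (by positivity), ← ENNReal.ofReal_mul (by positivity)]
    congr 1
    have hnorm : ‖(α : ℂ)⁻¹ * (FT m (k + L) - Real.exp (k + L))‖
        = α⁻¹ * ‖FT m (k + L) - Real.exp (k + L)‖ := by
      rw [norm_mul, norm_inv, Complex.norm_real, Real.norm_of_nonneg hα.le]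
    have hexpγ : Real.exp (-γ * k) = α ^ γ * Real.exp (-γ * (k + L)) := by
      rw [Real.rpow_def_of_pos hα, ← Real.exp_add]
      congr 1
      rw [hL]; ring
    have hpow : α ^ (γ - 2) = α ^ γ * (α⁻¹) ^ 2 := by
      rw [Real.rpow_sub hα, show (2 : ℝ) = ((2 : ℕ) : ℝ) by norm_num,
        Real.rpow_natCast]
      field_simp
    rw [hnorm, hexpγ, hpow]
    ring
  unfold Fgamma
  simp_rw [hpt]
  rw [lintegral_const_mul' _ _ ENNReal.ofReal_ne_top]
  congr 1
  exact lintegral_add_right_eq_self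
    (fun k => (‖FT m k - Real.exp k‖₊ : ℝ≥0∞) ^ 2
      * ENNReal.ofReal (Real.exp (-γ * k))) L
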